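/- For j ≥ 0, let L(j) denote the number of visits of the conditioned walk (S_n^+) to the interval [j, j+1) before its first entry into [j+2, ∞), when started from a point of [j, j+1). Then L(j) is stochastically dominated by a geometric random variable whose success probability is bounded below uniformly in j; in particular, there exist constants C₃, c₃ > 0 independent of j such that sup_{y ∈ [j, j+1)} P_y(L(j) ≥ m) ≤ C₃ e^{−c₃ m} for all m ≥ 1. -/

import Mathlib

open MeasureTheory Filter Real
open scoped ENNReal NNReal

attribute [local instance] Classical.propDecidable

noncomputable section

/-- `exp` on `[0,∞]`, with `exp ∞ = ∞`. -/
def expE (r : ℝ≥0∞) : ℝ≥0∞ := if r = ⊤ then ⊤ else ENNReal.ofReal (exp r.toReal)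

/-- Partial sums of a sequence of steps: the walk started at `0`. -/
def Swalk {Ω₀ : Type*} (ξ : ℕ → Ω₀ → ℝ) (n : ℕ) (ω : Ω₀) : ℝ := ∑ k ∈ Finset.range n, ξ k ω

/-- `(ξ k)` are i.i.d. with common law `μ` under `P₀`. -/
structure IsIIDSteps {Ω₀ : Type*} [MeasurableSpace Ω₀] (P₀ : Measure Ω₀) (ξ : ℕ → Ω₀ → ℝ)
    (μ : Measure ℝ) : Prop where
  meas : ∀ k, Measurable (ξ k)
  indep : ProbabilityTheory.iIndepFun ξ P₀
  ident : ∀ k, Measure.map (ξ k) P₀ = μ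

/-- The renewal function of the strictly descending ladder heights of the walk `(S_n)`:
`R(u) = 𝐄[∑_{j=0}^{τ⁺ - 1} 1{S_j ≥ -u}]` where `τ⁺ = inf {n ≥ 1 : S_n ≥ 0}`, the walk being
realized with i.i.d. steps `ξ` on an auxiliary probability space `(Ω₀, P₀)`. -/
def renewalR {Ω₀ : Type*} [MeasurableSpace Ω₀] (P₀ : Measure Ω₀) (ξ : ℕ → Ω₀ → ℝ)
    (u : ℝ) : ℝ :=
  (∫⁻ ω, ∑' j : ℕ,
      (if -u ≤ Swalk ξ j ω ∧ ∀ m, 1 ≤ m → m ≤ j → Swalk ξ m ω < 0 then (1 : ℝ≥0∞) else 0)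
    ∂P₀).toReal

/-- A centered, finite-variance, non-arithmetic random walk together with the family
`(𝐏_x)_{x ≥ 0}` of laws of the associated walk Doob-conditioned (via the harmonic renewal
function `R` of the descending ladder heights) to stay nonnegative, started at `x`.
The conditioned chain is `(S⁺_n)_{n ≥ 0} = Sp`. -/
structure CondWalk (Ω Ω₀ : Type*) [MeasurableSpace Ω] [MeasurableSpace Ω₀] where
  /-- the step distribution of the underlying random walk -/
  μ : Measure ℝ
  prob_μ : IsProbabilityMeasure μ
  integrable_id : Integrable id μ
  /-- centered steps -/
  centered : ∫ z, z ∂μ = 0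
  /-- finite variance -/
  finite_variance : ∫⁻ z, ENNReal.ofReal (z ^ 2) ∂μ < ⊤
  /-- non-arithmetic step distribution -/
  nonarithmetic : ¬ ∃ h > (0 : ℝ), μ {z : ℝ | ∃ k : ℤ, z = k * h} = 1
  /-- an auxiliary realization of the (unconditioned) walk, used to define `R` -/
  P₀ : Measure Ω₀
  prob_P₀ : IsProbabilityMeasure P₀
  ξ : ℕ → Ω₀ → ℝ
  iid : IsIIDSteps P₀ ξ μ
  /-- `Pf x` is the law `𝐏_x` of the conditioned walk started at `x ≥ 0` -/
  Pf : ℝ → Measure Ω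
  prob_Pf : ∀ x, 0 ≤ x → IsProbabilityMeasure (Pf x)
  /-- the conditioned walk `(S⁺_n)` -/
  Sp : ℕ → Ω → ℝ
  meas_Sp : ∀ n, Measurable (Sp n)
  start : ∀ x, 0 ≤ x → ∀ᵐ ω ∂Pf x, Sp 0 ω = x
  nonneg : ∀ x, 0 ≤ x → ∀ n, ∀ᵐ ω ∂Pf x, 0 ≤ Sp n ω
  /-- Markov property with the Doob `h`-transform transition kernel
  `P(S⁺_{n+1} ∈ dy ∣ S⁺_n = s) = (R(y)/R(s)) 1{y ≥ 0} μ(dy − s)`. -/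
  markov_doob : ∀ x, 0 ≤ x → ∀ n : ℕ,
    ∀ H : (ℕ → ℝ) → ℝ≥0∞, Measurable H →
      (∀ f g : ℕ → ℝ, (∀ k ≤ n, f k = g k) → H f = H g) →
    ∀ G : ℝ → ℝ≥0∞, Measurable G →
      ∫⁻ ω, H (fun k => Sp k ω) * G (Sp (n + 1) ω) ∂Pf x
        = ∫⁻ ω, H (fun k => Sp k ω) *
            ((ENNReal.ofReal (renewalR P₀ ξ (Sp n ω)))⁻¹ *
              ∫⁻ z, ENNReal.ofReal (renewalR P₀ ξ (Sp n ω + z)) *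
                (if 0 ≤ Sp n ω + z then G (Sp n ω + z) else 0) ∂μ) ∂Pf x

/-- A conditioned walk together with a coupled sequence `(Q_n)_{n ≥ 1}` of nonnegative
random variables such that, conditionally on `(S⁺_j, Q_j), 1 ≤ j ≤ n`, the law of
`(S⁺_{n+1}, Q_{n+1})` is that of `(S⁺_1, Q_1)` under `𝐏_{S⁺_n}`. -/
structure CondWalkQ (Ω Ω₀ : Type*) [MeasurableSpace Ω] [MeasurableSpace Ω₀]
    extends CondWalk Ω Ω₀ where
  /-- the coupled sequence `(Q_n)_{n ≥ 1}` -/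
  Q : ℕ → Ω → ℝ
  meas_Q : ∀ n, Measurable (Q n)
  nonneg_Q : ∀ x, 0 ≤ x → ∀ n, 1 ≤ n → ∀ᵐ ω ∂Pf x, 0 ≤ Q n ω
  /-- `E[f(S⁺_{n+1}, Q_{n+1}) ∣ (S⁺_j, Q_j), 1 ≤ j ≤ n] = g(S⁺_n)` with
  `g(x) = E_x[f(S⁺_1, Q_1)]`. -/
  cond_law : ∀ x, 0 ≤ x → ∀ n : ℕ, 1 ≤ n →
    ∀ F : ℝ × ℝ → ℝ≥0∞, Measurable F →
    ∀ H : (ℕ → ℝ × ℝ) → ℝ≥0∞, Measurable H →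
      (∀ f g : ℕ → ℝ × ℝ, (∀ k, 1 ≤ k → k ≤ n → f k = g k) → H f = H g) →
      ∫⁻ ω, H (fun k => (Sp k ω, Q k ω)) * F (Sp (n + 1) ω, Q (n + 1) ω) ∂Pf x
        = ∫⁻ ω, H (fun k => (Sp k ω, Q k ω)) *
            (∫⁻ ω', F (Sp 1 ω', Q 1 ω') ∂Pf (Sp n ω)) ∂Pf x

end
noncomputable section

/-- `L(j)`: the number of visits of the conditioned walk to `[j, j+1)` strictly before its
first entry (at a time `≥ 1`) into `[j+2, ∞)`, with values in `[0,∞]`. -/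
def localTimeL {Ω Ω₀ : Type*} [MeasurableSpace Ω] [MeasurableSpace Ω₀]
    (cw : CondWalk Ω Ω₀) (j : ℕ) (ω : Ω) : ℝ≥0∞ :=
  ∑' k : ℕ,
    if (∀ l, 1 ≤ l → l ≤ k → cw.Sp l ω < (j : ℝ) + 2) ∧
        cw.Sp k ω ∈ Set.Ico (j : ℝ) ((j : ℝ) + 1) then 1 else 0

end

namespace CondWalkProof

variable {Ω Ω₀ : Type*} [MeasurableSpace Ω] [MeasurableSpace Ω₀] (cw : CondWalk Ω Ω₀)

/-- the lintegral defining the renewal function -/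
noncomputable def Lam (x : ℝ) : ℝ≥0∞ :=
  ∫⁻ ω, ∑' j : ℕ,
      (if -x ≤ Swalk cw.ξ j ω ∧ ∀ m, 1 ≤ m → m ≤ j → Swalk cw.ξ m ω < 0 then (1 : ℝ≥0∞) else 0)
    ∂cw.P₀

noncomputable def rhoE (x : ℝ) : ℝ≥0∞ := ENNReal.ofReal (renewalR cw.P₀ cw.ξ x)

lemma rhoE_def (x : ℝ) : rhoE cw x = ENNReal.ofReal ((Lam cw x).toReal) := rfl

lemma Lam_mono {x y : ℝ} (hxy : x ≤ y) : Lam cw x ≤ Lam cw y := by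
  refine lintegral_mono fun ω => ENNReal.tsum_le_tsum fun j => ?_
  by_cases h : -x ≤ Swalk cw.ξ j ω ∧ ∀ m, 1 ≤ m → m ≤ j → Swalk cw.ξ m ω < 0
  · rw [if_pos h, if_pos ⟨le_trans (neg_le_neg hxy) h.1, h.2⟩]
  · rw [if_neg h]; exact zero_le

lemma one_le_Lam {x : ℝ} (hx : 0 ≤ x) : 1 ≤ Lam cw x := by
  haveI := cw.prob_P₀
  have hpt : ∀ ω : Ω₀, (1:ℝ≥0∞) ≤ ∑' j : ℕ,
      (if -x ≤ Swalk cw.ξ j ω ∧ ∀ m, 1 ≤ m → m ≤ j → Swalk cw.ξ m ω < 0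
        then (1:ℝ≥0∞) else 0) := by
    intro ω
    have h0 : (if -x ≤ Swalk cw.ξ 0 ω ∧ ∀ m, 1 ≤ m → m ≤ 0 → Swalk cw.ξ m ω < 0
        then (1:ℝ≥0∞) else 0) = 1 := by
      rw [if_pos]
      refine ⟨by simp [Swalk, neg_nonpos.mpr hx], fun m hm hm0 => by omega⟩
    exact le_trans (le_of_eq h0.symm) (ENNReal.le_tsum 0)
  calc (1:ℝ≥0∞) = ∫⁻ _ω, (1:ℝ≥0∞) ∂cw.P₀ := by simp
  _ ≤ Lam cw x := lintegral_mono hpt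

lemma norm_eq (x : ℝ) (hx : 0 ≤ x) :
    (1:ℝ≥0∞) = (rhoE cw x)⁻¹ *
      ∫⁻ z, rhoE cw (x + z) * (if 0 ≤ x + z then 1 else 0) ∂cw.μ := by
  haveI := cw.prob_Pf x hx
  have hm := cw.markov_doob x hx 0 (fun _ => 1) measurable_const (fun f g _ => rfl)
      (fun _ => 1) measurable_const
  simp only [one_mul] at hm
  rw [lintegral_one, measure_univ] at hm
  have hcongr : ∫⁻ ω, (ENNReal.ofReal (renewalR cw.P₀ cw.ξ (cw.Sp 0 ω)))⁻¹ *
        ∫⁻ z, ENNReal.ofReal (renewalR cw.P₀ cw.ξ (cw.Sp 0 ω + z)) *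
          (if 0 ≤ cw.Sp 0 ω + z then 1 else 0) ∂cw.μ ∂cw.Pf x
      = ∫⁻ _ω, ((ENNReal.ofReal (renewalR cw.P₀ cw.ξ x))⁻¹ *
        ∫⁻ z, ENNReal.ofReal (renewalR cw.P₀ cw.ξ (x + z)) *
          (if 0 ≤ x + z then 1 else 0) ∂cw.μ) ∂cw.Pf x := by
    refine lintegral_congr_ae ?_
    filter_upwards [cw.start x hx] with ω h
    rw [h]
  have hfin := hm.trans (hcongr.trans (by rw [lintegral_const, measure_univ, mul_one]))
  simp only [rhoE]
  exact hfin

lemma Lam_ne_top (x : ℝ) (hx : 0 ≤ x) : Lam cw x ≠ ⊤ := by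
  intro htop
  have h0 : rhoE cw x = 0 := by
    rw [rhoE_def, htop]
    simp
  have := norm_eq cw x hx
  rw [h0, ENNReal.inv_zero] at this
  rcases eq_or_ne (∫⁻ z, rhoE cw (x + z) * (if 0 ≤ x + z then 1 else 0) ∂cw.μ) 0 with h | h
  · rw [h, mul_zero] at this; exact one_ne_zero this
  · rw [ENNReal.top_mul h] at this; exact ENNReal.one_ne_top this

lemma rhoE_eq_Lam (x : ℝ) (hx : 0 ≤ x) : rhoE cw x = Lam cw x := by
  rw [rhoE_def, ENNReal.ofReal_toReal (Lam_ne_top cw x hx)]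

lemma one_le_rhoE (x : ℝ) (hx : 0 ≤ x) : 1 ≤ rhoE cw x := by
  rw [rhoE_eq_Lam cw x hx]; exact one_le_Lam cw hx

lemma rhoE_ne_top (x : ℝ) (hx : 0 ≤ x) : rhoE cw x ≠ ⊤ := by
  rw [rhoE_eq_Lam cw x hx]; exact Lam_ne_top cw x hx

lemma rhoE_ne_zero (x : ℝ) (hx : 0 ≤ x) : rhoE cw x ≠ 0 :=
  fun h => by simpa [h] using one_le_rhoE cw x hx

lemma rhoE_mono {x y : ℝ} (hx : 0 ≤ x) (hxy : x ≤ y) : rhoE cw x ≤ rhoE cw y := by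
  rw [rhoE_eq_Lam cw x hx, rhoE_eq_Lam cw y (hx.trans hxy)]
  exact Lam_mono cw hxy

end CondWalkProof
namespace CondWalkProof

variable {Ω Ω₀ : Type*} [MeasurableSpace Ω] [MeasurableSpace Ω₀] (cw : CondWalk Ω Ω₀)

lemma rhoE_ofReal (x : ℝ) : ENNReal.ofReal (renewalR cw.P₀ cw.ξ x) = rhoE cw x := rfl

lemma exists_delta : ∃ δ : ℝ, 0 < δ ∧ cw.μ {z : ℝ | δ ≤ z} ≠ 0 := by
  haveI := cw.prob_μ
  by_contra h
  push_neg at h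
  have hpos : cw.μ {z : ℝ | 0 < z} = 0 := by
    have hsub : {z : ℝ | 0 < z} ⊆ ⋃ n : ℕ, {z : ℝ | 1/(n+1) ≤ z} := by
      intro z hz
      obtain ⟨n, hn⟩ := exists_nat_one_div_lt (show (0:ℝ) < z from hz)
      exact Set.mem_iUnion.mpr ⟨n, le_of_lt hn⟩
    refine measure_mono_null hsub (measure_iUnion_null fun n => h _ (by positivity))
  have hmem : {z : ℝ | ¬ 0 < z} ∈ ae cw.μ := by
    rw [mem_ae_iff, Set.compl_setOf]
    simp only [not_not]
    exact hpos
  have hae : 0 ≤ᵐ[cw.μ] fun z : ℝ => -z := by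
    filter_upwards [hmem] with z hz
    simp only [Set.mem_setOf_eq, not_lt] at hz
    simpa using hz
  have hint : Integrable (fun z : ℝ => -z) cw.μ := cw.integrable_id.neg
  have hzero : ∫ z, -z ∂cw.μ = 0 := by
    rw [integral_neg]
    simpa using congrArg Neg.neg cw.centered
  have haez := (integral_eq_zero_iff_of_nonneg_ae hae hint).mp hzero
  have h0 : ∀ᵐ z ∂cw.μ, z = 0 := by
    filter_upwards [haez] with z hz
    have hz' : -z = (0:ℝ) := hz
    linarith
  refine cw.nonarithmetic ⟨1, one_pos, ?_⟩
  have hcompl : cw.μ {z : ℝ | ¬ ∃ k : ℤ, z = k * 1} = 0 := by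
    refine measure_mono_null ?_ (ae_iff.mp h0)
    intro z hz
    simp only [Set.mem_setOf_eq] at hz ⊢
    intro hz0
    exact hz ⟨0, by simp [hz0]⟩
  have h1 : (1:ℝ≥0∞) = cw.μ Set.univ := (measure_univ).symm
  have hle : cw.μ Set.univ ≤ cw.μ {z : ℝ | ∃ k : ℤ, z = k * 1} + cw.μ {z : ℝ | ¬ ∃ k : ℤ, z = k * 1} := by
    rw [show ({z : ℝ | ¬ ∃ k : ℤ, z = k * 1}) = {z : ℝ | ∃ k : ℤ, z = k * 1}ᶜ from rfl]
    rw [← Set.union_compl_self {z : ℝ | ∃ k : ℤ, z = k * 1}]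
    exact measure_union_le _ _
  rw [hcompl, add_zero] at hle
  exact le_antisymm prob_le_one (h1 ▸ hle)

lemma kernel_lb (δ : ℝ) (hδ : 0 < δ) (x c : ℝ) (hx : 0 ≤ x) (hc : c ≤ x + δ) :
    cw.μ {z : ℝ | δ ≤ z} ≤ (rhoE cw x)⁻¹ *
      ∫⁻ z, rhoE cw (x + z) *
        (if 0 ≤ x + z then (if c ≤ x + z then (1:ℝ≥0∞) else 0) else 0) ∂cw.μ := by
  have hlow : ∀ z : ℝ, ({z : ℝ | δ ≤ z}).indicator (fun _ => rhoE cw x) z ≤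
      rhoE cw (x + z) * (if 0 ≤ x + z then (if c ≤ x + z then (1:ℝ≥0∞) else 0) else 0) := by
    intro z
    by_cases hz : z ∈ {z : ℝ | δ ≤ z}
    · rw [Set.indicator_of_mem hz]
      have hz' : δ ≤ z := hz
      have h0 : 0 ≤ x + z := by linarith
      have h1 : c ≤ x + z := by linarith
      rw [if_pos h0, if_pos h1, mul_one]
      exact rhoE_mono cw hx (by linarith)
    · rw [Set.indicator_of_notMem hz]; exact zero_le
  have hms : MeasurableSet {z : ℝ | δ ≤ z} := measurableSet_Ici
  have hint : rhoE cw x * cw.μ {z : ℝ | δ ≤ z} ≤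
      ∫⁻ z, rhoE cw (x + z) *
        (if 0 ≤ x + z then (if c ≤ x + z then (1:ℝ≥0∞) else 0) else 0) ∂cw.μ := by
    rw [← lintegral_indicator_const hms (rhoE cw x)]
    exact lintegral_mono hlow
  calc cw.μ {z : ℝ | δ ≤ z}
      = (rhoE cw x)⁻¹ * (rhoE cw x * cw.μ {z : ℝ | δ ≤ z}) := by
        rw [← mul_assoc, ENNReal.inv_mul_cancel (rhoE_ne_zero cw x hx) (rhoE_ne_top cw x hx),
          one_mul]
  _ ≤ _ := mul_le_mul_right hint _

lemma step_up (x : ℝ) (hx : 0 ≤ x) (δ : ℝ) (hδ : 0 < δ) (q : ℝ≥0∞)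
    (hq : q ≤ cw.μ {z : ℝ | δ ≤ z})
    (n : ℕ) (a : ℝ) (ha : 0 ≤ a)
    (H : (ℕ → ℝ) → ℝ≥0∞) (hH : Measurable H)
    (hHc : ∀ f g : ℕ → ℝ, (∀ k ≤ n, f k = g k) → H f = H g)
    (hsupp : ∀ f, H f ≠ 0 → a ≤ f n) :
    q * ∫⁻ ω, H (fun k => cw.Sp k ω) ∂cw.Pf x ≤
      ∫⁻ ω, H (fun k => cw.Sp k ω) * (if a + δ ≤ cw.Sp (n+1) ω then 1 else 0) ∂cw.Pf x := by
  haveI := cw.prob_μ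
  have hqt : q ≠ ⊤ := fun h => by
    have := hq.trans_lt (measure_lt_top cw.μ _)
    rw [h] at this
    exact (lt_irrefl _ this)
  have hGm : Measurable (fun s : ℝ => if a + δ ≤ s then (1:ℝ≥0∞) else 0) := by
    have : (fun s : ℝ => if a + δ ≤ s then (1:ℝ≥0∞) else 0)
        = Set.indicator (Set.Ici (a+δ)) (fun _ => 1) := by
      ext s; by_cases h : a + δ ≤ s <;> simp [h, Set.indicator, Set.mem_Ici]
    rw [this]; exact measurable_const.indicator measurableSet_Ici
  have hmkv := cw.markov_doob x hx n H hH hHc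
      (fun s : ℝ => if a + δ ≤ s then (1:ℝ≥0∞) else 0) hGm
  rw [hmkv]
  have hql : q * ∫⁻ ω, H (fun k => cw.Sp k ω) ∂cw.Pf x
      = ∫⁻ ω, H (fun k => cw.Sp k ω) * q ∂cw.Pf x := by
    rw [lintegral_mul_const' q _ hqt, mul_comm]
  rw [hql]
  refine lintegral_mono fun ω => ?_
  by_cases h0 : H (fun k => cw.Sp k ω) = 0
  · rw [h0, zero_mul, zero_mul]
  · refine mul_le_mul_right ?_ _
    have hxa : a ≤ cw.Sp n ω := hsupp _ h0
    have hk := kernel_lb cw δ hδ (cw.Sp n ω) (a + δ) (ha.trans hxa) (by linarith)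
    simp only [rhoE_ofReal]
    exact hq.trans hk

/-- product of "goes up by δ at each of the N steps after t, above base a" indicators -/
noncomputable def prodUp (a δ : ℝ) (t N : ℕ) (f : ℕ → ℝ) : ℝ≥0∞ :=
  ∏ i ∈ Finset.range N, (if a + ((i:ℝ)+1)*δ ≤ f (t+i+1) then 1 else 0)

lemma prodUp_measurable (a δ : ℝ) (t N : ℕ) : Measurable (prodUp a δ t N) := by
  refine Finset.measurable_prod _ fun i _ => ?_
  have : (fun f : ℕ → ℝ => if a + ((i:ℝ)+1)*δ ≤ f (t+i+1) then (1:ℝ≥0∞) else 0)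
      = Set.indicator ((fun f : ℕ → ℝ => f (t+i+1)) ⁻¹' (Set.Ici (a + ((i:ℝ)+1)*δ)))
          (fun _ => 1) := by
    ext f; by_cases h : a + ((i:ℝ)+1)*δ ≤ f (t+i+1) <;>
      simp [h, Set.indicator, Set.mem_Ici]
  rw [this]
  exact measurable_const.indicator ((measurable_pi_apply _) measurableSet_Ici)

lemma iterate_up (x : ℝ) (hx : 0 ≤ x) (δ : ℝ) (hδ : 0 < δ) (q : ℝ≥0∞)
    (hq : q ≤ cw.μ {z : ℝ | δ ≤ z})
    (t : ℕ) (a : ℝ) (ha : 0 ≤ a)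
    (H : (ℕ → ℝ) → ℝ≥0∞) (hH : Measurable H)
    (hHc : ∀ f g : ℕ → ℝ, (∀ k ≤ t, f k = g k) → H f = H g)
    (hsupp : ∀ f, H f ≠ 0 → a ≤ f t) (N : ℕ) :
    q^N * ∫⁻ ω, H (fun k => cw.Sp k ω) ∂cw.Pf x ≤
      ∫⁻ ω, H (fun k => cw.Sp k ω) * prodUp a δ t N (fun k => cw.Sp k ω) ∂cw.Pf x := by
  induction N with
  | zero => simp [prodUp]
  | succ N ih =>
    set H' : (ℕ → ℝ) → ℝ≥0∞ := fun f => H f * prodUp a δ t N f with hH'def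
    have hH'm : Measurable H' := hH.mul (prodUp_measurable a δ t N)
    have hH'c : ∀ f g : ℕ → ℝ, (∀ k ≤ t + N, f k = g k) → H' f = H' g := by
      intro f g hfg
      simp only [hH'def, prodUp]
      rw [hHc f g fun k hk => hfg k (hk.trans (Nat.le_add_right _ _))]
      congr 1
      refine Finset.prod_congr rfl fun i hi => ?_
      rw [hfg (t+i+1) (by have := Finset.mem_range.mp hi; omega)]
    have hsupp' : ∀ f, H' f ≠ 0 → a + (N:ℝ)*δ ≤ f (t + N) := by
      intro f hf
      rcases Nat.eq_zero_or_pos N with h | h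
      · subst h
        simp only [Nat.cast_zero, zero_mul, add_zero, Nat.add_zero]
        refine hsupp f fun h0 => hf ?_
        simp only [hH'def, h0, zero_mul]
      · have hne : ∀ i ∈ Finset.range N,
            (if a + ((i:ℝ)+1)*δ ≤ f (t+i+1) then (1:ℝ≥0∞) else 0) ≠ 0 := by
          intro i hi
          intro hzero
          refine hf ?_
          simp only [hH'def, prodUp]
          rw [Finset.prod_eq_zero hi hzero, mul_zero]
        have := hne (N-1) (Finset.mem_range.mpr (by omega))
        by_cases hcond : a + (((N-1:ℕ):ℝ)+1)*δ ≤ f (t+(N-1)+1)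
        · have heq : t + (N-1) + 1 = t + N := by omega
          have heq2 : (((N-1:ℕ):ℝ)+1) = (N:ℝ) := by
            have : ((N-1:ℕ):ℝ) = (N:ℝ) - 1 := by
              push_cast [Nat.cast_sub h]; ring
            rw [this]; ring
          rw [heq, heq2] at hcond
          exact hcond
        · exact absurd (if_neg hcond) this
    have hstep := step_up cw x hx δ hδ q hq (t+N) (a + (N:ℝ)*δ)
        (by positivity) H' hH'm hH'c hsupp'
    calc q^(N+1) * ∫⁻ ω, H (fun k => cw.Sp k ω) ∂cw.Pf x
        = q * (q^N * ∫⁻ ω, H (fun k => cw.Sp k ω) ∂cw.Pf x) := by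
          rw [pow_succ, mul_comm (q^N) q, mul_assoc]
    _ ≤ q * ∫⁻ ω, H' (fun k => cw.Sp k ω) ∂cw.Pf x := mul_le_mul_right ih _
    _ ≤ ∫⁻ ω, H' (fun k => cw.Sp k ω) *
          (if a + (N:ℝ)*δ + δ ≤ cw.Sp (t+N+1) ω then 1 else 0) ∂cw.Pf x := hstep
    _ = ∫⁻ ω, H (fun k => cw.Sp k ω) * prodUp a δ t (N+1) (fun k => cw.Sp k ω) ∂cw.Pf x := by
          refine lintegral_congr fun ω => ?_
          simp only [hH'def, prodUp, Finset.prod_range_succ, mul_assoc]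
          congr 2
          rw [show a + (N:ℝ)*δ + δ = a + ((N:ℝ)+1)*δ by ring]
end CondWalkProof
namespace CondWalkProof

/-- `k` is a counted visit to `[j,j+1)` for the path `f` -/
def goodP (j : ℕ) (f : ℕ → ℝ) (k : ℕ) : Prop :=
  (∀ l, 1 ≤ l → l ≤ k → f l < (j:ℝ) + 2) ∧ ((j:ℝ) ≤ f k ∧ f k < (j:ℝ) + 1)

/-- number of counted visits up to time `t` -/
noncomputable def cnt (j t : ℕ) (f : ℕ → ℝ) : ℕ :=
  ((Finset.range (t+1)).filter (fun k => goodP j f k)).card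

lemma cnt_succ (j t : ℕ) (f : ℕ → ℝ) :
    cnt j (t+1) f = cnt j t f + (if goodP j f (t+1) then 1 else 0) := by
  unfold cnt
  rw [Finset.range_add_one, Finset.filter_insert]
  by_cases h : goodP j f (t+1)
  · rw [if_pos h, if_pos h, Finset.card_insert_of_notMem (by simp)]
  · rw [if_neg h, if_neg h, add_zero]

lemma cnt_zero (j : ℕ) (f : ℕ → ℝ) :
    cnt j 0 f = if goodP j f 0 then 1 else 0 := by
  unfold cnt
  rw [show Finset.range 1 = {0} from rfl, Finset.filter_singleton]
  by_cases h : goodP j f 0 <;> simp [h]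

lemma cnt_mono (j : ℕ) (f : ℕ → ℝ) {s t : ℕ} (h : s ≤ t) : cnt j s f ≤ cnt j t f :=
  Finset.card_le_card (Finset.filter_subset_filter _
    (Finset.range_subset_range.mpr (by omega)))

/-- L1: a finset of good indices bounds the local time from below -/
lemma le_tsum_of_finset (j : ℕ) (f : ℕ → ℝ) (M : ℕ) (F : Finset ℕ)
    (hF : ∀ k ∈ F, goodP j f k) (hcard : M ≤ F.card) :
    (M : ℝ≥0∞) ≤ ∑' k : ℕ, if goodP j f k then (1:ℝ≥0∞) else 0 := by
  have h1 : (M : ℝ≥0∞) ≤ (F.card : ℝ≥0∞) := by exact_mod_cast hcard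
  refine h1.trans ?_
  have h2 : (F.card : ℝ≥0∞) = ∑ k ∈ F, (if goodP j f k then (1:ℝ≥0∞) else 0) := by
    rw [Finset.card_eq_sum_ones]
    push_cast
    refine Finset.sum_congr rfl fun k hk => ?_
    rw [if_pos (hF k hk)]
  rw [h2]
  exact ENNReal.sum_le_tsum F

/-- L2: extraction of a finset of good indices from the local time -/
lemma exists_finset_of_le_tsum (j : ℕ) (f : ℕ → ℝ) (M : ℕ)
    (h : (M : ℝ≥0∞) ≤ ∑' k : ℕ, if goodP j f k then (1:ℝ≥0∞) else 0) :
    ∃ F : Finset ℕ, (∀ k ∈ F, goodP j f k) ∧ F.card = M := by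
  set S : Set ℕ := {k | goodP j f k} with hS
  rcases S.finite_or_infinite with hfin | hinf
  · have htsum : ∑' k : ℕ, (if goodP j f k then (1:ℝ≥0∞) else 0)
        = (hfin.toFinset.card : ℝ≥0∞) := by
      rw [tsum_eq_sum (s := hfin.toFinset) (fun k hk => if_neg (by simpa [hS] using hk))]
      rw [Finset.card_eq_sum_ones]
      push_cast
      refine Finset.sum_congr rfl fun k hk => ?_
      rw [if_pos (by simpa [hS] using hk)]
    rw [htsum] at h
    have hM : M ≤ hfin.toFinset.card := by exact_mod_cast h
    obtain ⟨F, hFsub, hFcard⟩ := Finset.exists_subset_card_eq hM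
    exact ⟨F, fun k hk => by simpa [hS] using hFsub hk, hFcard⟩
  · obtain ⟨F, hFsub, hFcard⟩ := hinf.exists_subset_card_eq M
    exact ⟨F, fun k hk => hFsub hk, hFcard⟩

/-- L3: existence of the m-th visit time, with n further visits afterwards -/
lemma exists_mth_visit (j m n : ℕ) (hm : 1 ≤ m) (f : ℕ → ℝ) (F : Finset ℕ)
    (hF : ∀ k ∈ F, goodP j f k) (hcard : F.card = m + n) :
    ∃ t, goodP j f t ∧ cnt j t f = m ∧
      ∃ G : Finset ℕ, (∀ k ∈ G, goodP j f k ∧ t < k) ∧ n ≤ G.card := by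
  have hFne : F.Nonempty := Finset.card_pos.mp (by omega)
  have hbig : m ≤ cnt j (F.max' hFne) f := by
    have hsub : F ⊆ (Finset.range (F.max' hFne + 1)).filter (fun k => goodP j f k) := by
      intro k hk
      refine Finset.mem_filter.mpr ⟨Finset.mem_range.mpr ?_, hF k hk⟩
      have := Finset.le_max' F k hk
      omega
    have := Finset.card_le_card hsub
    unfold cnt
    omega
  have hex : ∃ t, m ≤ cnt j t f := ⟨_, hbig⟩
  classical
  obtain ⟨t, htle, htmin⟩ : ∃ t, m ≤ cnt j t f ∧ ∀ s, s < t → cnt j s f < m :=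
    ⟨Nat.find hex, Nat.find_spec hex, fun s hs => by
      have := Nat.find_min hex hs; omega⟩
  have hcnt : cnt j t f = m := by
    rcases Nat.eq_zero_or_pos t with h0 | hpos
    · rw [h0] at htle ⊢
      rw [cnt_zero] at htle ⊢
      by_cases hg : goodP j f 0
      · rw [if_pos hg] at htle ⊢; omega
      · rw [if_neg hg] at htle; omega
    · obtain ⟨s, hts⟩ : ∃ s, t = s + 1 := ⟨t - 1, by omega⟩
      have hs := htmin s (by omega)
      have h2 := cnt_succ j s f
      rw [← hts] at h2
      by_cases hg : goodP j f t
      · rw [if_pos hg] at h2; omega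
      · rw [if_neg hg] at h2; omega
  have hgood : goodP j f t := by
    by_contra hg
    rcases Nat.eq_zero_or_pos t with h0 | hpos
    · rw [h0] at htle
      rw [cnt_zero, if_neg (h0 ▸ hg)] at htle
      omega
    · obtain ⟨s, hts⟩ : ∃ s, t = s + 1 := ⟨t - 1, by omega⟩
      have hs := htmin s (by omega)
      have h2 := cnt_succ j s f
      rw [← hts] at h2
      rw [if_neg hg] at h2
      omega
  refine ⟨t, hgood, hcnt, F.filter (fun k => t < k), fun k hk => ?_, ?_⟩
  · obtain ⟨hk1, hk2⟩ := Finset.mem_filter.mp hk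
    exact ⟨hF k hk1, hk2⟩
  · have hsplit := Finset.card_filter_add_card_filter_not
      (s := F) (p := fun k => t < k)
    have hle : (F.filter (fun k => ¬ t < k)).card ≤ m := by
      have hsub : F.filter (fun k => ¬ t < k) ⊆
          (Finset.range (t+1)).filter (fun k => goodP j f k) := by
        intro k hk
        obtain ⟨hk1, hk2⟩ := Finset.mem_filter.mp hk
        exact Finset.mem_filter.mpr ⟨Finset.mem_range.mpr (by omega), hF k hk1⟩
      have := Finset.card_le_card hsub
      unfold cnt at hcnt
      omega
    omega

lemma visit_unique (j m : ℕ) (f : ℕ → ℝ) {t t' : ℕ}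
    (h : goodP j f t ∧ cnt j t f = m) (h' : goodP j f t' ∧ cnt j t' f = m) : t = t' := by
  by_contra hne
  wlog hlt : t < t' generalizing t t'
  · exact this h' h (Ne.symm hne) (by omega)
  have hsub : insert t' ((Finset.range (t+1)).filter (fun k => goodP j f k))
      ⊆ (Finset.range (t'+1)).filter (fun k => goodP j f k) := by
    intro k hk
    rcases Finset.mem_insert.mp hk with rfl | hk
    · exact Finset.mem_filter.mpr ⟨Finset.mem_range.mpr (by omega), h'.1⟩
    · obtain ⟨hk1, hk2⟩ := Finset.mem_filter.mp hk
      exact Finset.mem_filter.mpr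
        ⟨Finset.mem_range.mpr (by have := Finset.mem_range.mp hk1; omega), hk2⟩
  have hcard := Finset.card_le_card hsub
  rw [Finset.card_insert_of_notMem (fun hmem => by
    have := Finset.mem_range.mp (Finset.mem_filter.mp hmem).1; omega)] at hcard
  have h1 := h.2
  have h2 := h'.2
  unfold cnt at h1 h2
  omega

lemma escape (j N : ℕ) (δ : ℝ) (hδ : 0 < δ) (hNδ : 2 ≤ (N:ℝ)*δ) (f : ℕ → ℝ) (t : ℕ)
    (hE : ∀ i, i < N → (j:ℝ) + ((i:ℝ)+1)*δ ≤ f (t+i+1))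
    (G : Finset ℕ) (hG : ∀ k ∈ G, goodP j f k ∧ t < k) : G.card < N := by
  have hN1 : 1 ≤ N := by
    by_contra h
    have hN0 : N = 0 := by omega
    rw [hN0] at hNδ; norm_num at hNδ
  have htop : (j:ℝ) + 2 ≤ f (t+N) := by
    have hh := hE (N-1) (by omega)
    have hcast : ((N-1:ℕ):ℝ) + 1 = (N:ℝ) := by
      have : ((N-1:ℕ):ℝ) = (N:ℝ) - 1 := by
        push_cast [Nat.cast_sub hN1]; ring
      rw [this]; ring
    rw [hcast] at hh
    have ht : t + (N-1) + 1 = t + N := by omega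
    rw [ht] at hh
    linarith
  have hsub : G ⊆ Finset.Ioo t (t+N) := by
    intro k hk
    obtain ⟨hgk, htk⟩ := hG k hk
    refine Finset.mem_Ioo.mpr ⟨htk, ?_⟩
    by_contra hge
    have hkN : t + N ≤ k := by omega
    have := hgk.1 (t+N) (by omega) hkN
    linarith
  have := Finset.card_le_card hsub
  rw [Nat.card_Ioo] at this
  omega

lemma main_pointwise (j m N : ℕ) (hm : 1 ≤ m) (δ : ℝ) (hδ : 0 < δ)
    (hNδ : 2 ≤ (N:ℝ)*δ) (f : ℕ → ℝ)
    (hL : ((m+N:ℕ) : ℝ≥0∞) ≤ ∑' k : ℕ, if goodP j f k then (1:ℝ≥0∞) else 0) :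
    ∃ t, (goodP j f t ∧ cnt j t f = m) ∧
      ¬ (∀ i, i < N → (j:ℝ) + ((i:ℝ)+1)*δ ≤ f (t+i+1)) := by
  obtain ⟨F, hF, hFcard⟩ := exists_finset_of_le_tsum j f (m+N) hL
  obtain ⟨t, hgood, hcnt, G, hG, hGcard⟩ := exists_mth_visit j m N hm f F hF hFcard
  refine ⟨t, ⟨hgood, hcnt⟩, fun hE => ?_⟩
  have := escape j N δ hδ hNδ f t hE G hG
  omega

lemma visit_le_tsum (j m t : ℕ) (f : ℕ → ℝ) (hcnt : cnt j t f = m) :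
    (m : ℝ≥0∞) ≤ ∑' k : ℕ, if goodP j f k then (1:ℝ≥0∞) else 0 := by
  refine le_tsum_of_finset j f m ((Finset.range (t+1)).filter (fun k => goodP j f k))
    (fun k hk => (Finset.mem_filter.mp hk).2) ?_
  unfold cnt at hcnt
  omega

lemma exists_visit (j m : ℕ) (hm : 1 ≤ m) (f : ℕ → ℝ)
    (hL : (m : ℝ≥0∞) ≤ ∑' k : ℕ, if goodP j f k then (1:ℝ≥0∞) else 0) :
    ∃ t, goodP j f t ∧ cnt j t f = m := by
  obtain ⟨F, hF, hFcard⟩ := exists_finset_of_le_tsum j f m hL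
  obtain ⟨t, hgood, hcnt, -⟩ := exists_mth_visit j m 0 hm f F hF (by omega)
  exact ⟨t, hgood, hcnt⟩

end CondWalkProof
namespace CondWalkProof

variable {Ω Ω₀ : Type*} [MeasurableSpace Ω] [MeasurableSpace Ω₀] (cw : CondWalk Ω Ω₀)

lemma measurable_goodSet (j k : ℕ) : MeasurableSet {f : ℕ → ℝ | goodP j f k} := by
  have h1 : {f : ℕ → ℝ | goodP j f k} =
      (⋂ l : ℕ, {f : ℕ → ℝ | 1 ≤ l → l ≤ k → f l < (j:ℝ)+2}) ∩
        ({f : ℕ → ℝ | (j:ℝ) ≤ f k} ∩ {f : ℕ → ℝ | f k < (j:ℝ)+1}) := by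
    ext f
    simp only [goodP, Set.mem_inter_iff, Set.mem_iInter, Set.mem_setOf_eq]
    all_goals tauto
  rw [h1]
  refine MeasurableSet.inter (MeasurableSet.iInter fun l => ?_) (MeasurableSet.inter ?_ ?_)
  · by_cases h : 1 ≤ l ∧ l ≤ k
    · have h2 : {f : ℕ → ℝ | 1 ≤ l → l ≤ k → f l < (j:ℝ)+2}
          = (fun f : ℕ → ℝ => f l) ⁻¹' Set.Iio ((j:ℝ)+2) := by
        ext f
        simp [h.1, h.2, Set.mem_Iio]
      rw [h2]
      exact measurable_pi_apply l measurableSet_Iio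
    · have h2 : {f : ℕ → ℝ | 1 ≤ l → l ≤ k → f l < (j:ℝ)+2} = Set.univ := by
        ext f
        simp only [Set.mem_setOf_eq, Set.mem_univ, iff_true]
        intro h1 h2
        exact absurd ⟨h1, h2⟩ h
      rw [h2]
      exact MeasurableSet.univ
  · exact measurable_pi_apply k measurableSet_Ici
  · exact measurable_pi_apply k measurableSet_Iio

lemma measurable_cnt (j t : ℕ) : Measurable (fun f : ℕ → ℝ => cnt j t f) := by
  have h : (fun f : ℕ → ℝ => cnt j t f) =
      fun f => ∑ k ∈ Finset.range (t+1), (if goodP j f k then 1 else 0) := by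
    ext f
    rw [cnt, Finset.card_filter]
  rw [h]
  refine Finset.measurable_sum _ fun k _ => ?_
  exact Measurable.ite (measurable_goodSet j k) measurable_const measurable_const

/-- the set of paths whose m-th counted visit happens at time `t` -/
def DsetP (j m t : ℕ) : Set (ℕ → ℝ) := {f | goodP j f t ∧ cnt j t f = m}

lemma measurable_DsetP (j m t : ℕ) : MeasurableSet (DsetP j m t) := by
  have h : DsetP j m t = {f : ℕ → ℝ | goodP j f t} ∩
      ((fun f : ℕ → ℝ => cnt j t f) ⁻¹' {m}) := rfl
  rw [h]
  exact (measurable_goodSet j t).inter ((measurable_cnt j t) (measurableSet_singleton m))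

/-- the `N`-fold climb event after time `t` -/
def EsetP (j : ℕ) (δ : ℝ) (N t : ℕ) : Set (ℕ → ℝ) :=
  {f | ∀ i, i < N → (j:ℝ) + ((i:ℝ)+1)*δ ≤ f (t+i+1)}

lemma measurable_EsetP (j : ℕ) (δ : ℝ) (N t : ℕ) : MeasurableSet (EsetP j δ N t) := by
  have h : EsetP j δ N t = ⋂ i ∈ Finset.range N,
      ((fun f : ℕ → ℝ => f (t+i+1)) ⁻¹' Set.Ici ((j:ℝ) + ((i:ℝ)+1)*δ)) := by
    ext f
    simp only [EsetP, Set.mem_setOf_eq, Set.mem_iInter, Set.mem_preimage, Set.mem_Ici,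
      Finset.mem_range]
  rw [h]
  exact MeasurableSet.biInter (Set.to_countable _)
    (fun i _ => measurable_pi_apply (t+i+1) measurableSet_Ici)

lemma prodUp_eq_indicator (a δ : ℝ) (t N : ℕ) (f : ℕ → ℝ) :
    prodUp a δ t N f = if (∀ i, i < N → a + ((i:ℝ)+1)*δ ≤ f (t+i+1)) then 1 else 0 := by
  by_cases h : ∀ i, i < N → a + ((i:ℝ)+1)*δ ≤ f (t+i+1)
  · rw [if_pos h]
    exact Finset.prod_eq_one fun i hi => if_pos (h i (Finset.mem_range.mp hi))
  · rw [if_neg h]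
    push_neg at h
    obtain ⟨i, hiN, hi⟩ := h
    exact Finset.prod_eq_zero (Finset.mem_range.mpr hiN) (if_neg (not_le.mpr hi))

lemma measurable_path : Measurable (fun ω => (fun k => cw.Sp k ω)) :=
  measurable_pi_lambda _ fun k => cw.meas_Sp k

lemma localTime_eq (j : ℕ) (ω : Ω) :
    localTimeL cw j ω = ∑' k : ℕ, if goodP j (fun n => cw.Sp n ω) k then (1:ℝ≥0∞) else 0 := by
  unfold localTimeL
  refine tsum_congr fun k => ?_
  by_cases h : goodP j (fun n => cw.Sp n ω) k
  · have h' : (∀ l, 1 ≤ l → l ≤ k → cw.Sp l ω < (j:ℝ)+2) ∧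
        cw.Sp k ω ∈ Set.Ico (j:ℝ) ((j:ℝ)+1) := h
    rw [if_pos h', if_pos h]
  · have h' : ¬ ((∀ l, 1 ≤ l → l ≤ k → cw.Sp l ω < (j:ℝ)+2) ∧
        cw.Sp k ω ∈ Set.Ico (j:ℝ) ((j:ℝ)+1)) := fun hc => h hc
    rw [if_neg h', if_neg h]

lemma recursion (j : ℕ) (y : ℝ) (hy0 : 0 ≤ y) (m N : ℕ) (hm : 1 ≤ m)
    (δ : ℝ) (hδ : 0 < δ) (hNδ : 2 ≤ (N:ℝ)*δ)
    (q : ℝ≥0∞) (hq : q ≤ cw.μ {z : ℝ | δ ≤ z}) :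
    cw.Pf y {ω | ((m+N:ℕ) : ℝ≥0∞) ≤ localTimeL cw j ω}
      ≤ (1 - q^N) * cw.Pf y {ω | (m : ℝ≥0∞) ≤ localTimeL cw j ω} := by
  haveI := cw.prob_Pf y hy0
  haveI := cw.prob_μ
  set path : Ω → (ℕ → ℝ) := fun ω => (fun k => cw.Sp k ω) with hpath
  set Dt : ℕ → Set Ω := fun t => path ⁻¹' DsetP j m t with hDt
  set Et : ℕ → Set Ω := fun t => path ⁻¹' EsetP j δ N t with hEt
  have hDtm : ∀ t, MeasurableSet (Dt t) := fun t =>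
    measurable_path cw (measurable_DsetP j m t)
  have hEtm : ∀ t, MeasurableSet (Et t) := fun t =>
    measurable_path cw (measurable_EsetP j δ N t)
  -- step 1: inclusion
  have hsub : {ω | ((m+N:ℕ) : ℝ≥0∞) ≤ localTimeL cw j ω} ⊆ ⋃ t, (Dt t \ Et t) := by
    intro ω hω
    rw [Set.mem_setOf_eq, localTime_eq] at hω
    obtain ⟨t, hD, hE⟩ := main_pointwise j m N hm δ hδ hNδ (path ω) hω
    exact Set.mem_iUnion.mpr ⟨t, ⟨hD, hE⟩⟩
  -- step 2: per-t estimate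
  have hper : ∀ t, q^N * cw.Pf y (Dt t) ≤ cw.Pf y (Dt t ∩ Et t) := by
    intro t
    set H : (ℕ → ℝ) → ℝ≥0∞ := fun f => if f ∈ DsetP j m t then 1 else 0 with hH
    have hHm : Measurable H := by
      have : H = (DsetP j m t).indicator (fun _ => 1) := by
        ext f
        rw [hH, Set.indicator_apply]
      rw [this]
      exact measurable_const.indicator (measurable_DsetP j m t)
    have hHc : ∀ f g : ℕ → ℝ, (∀ k ≤ t, f k = g k) → H f = H g := by
      intro f g hfg
      have hgood : goodP j f t ↔ goodP j g t := by
        unfold goodP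
        constructor
        · rintro ⟨h1, h2, h3⟩
          refine ⟨fun l hl1 hl2 => by rw [← hfg l hl2]; exact h1 l hl1 hl2, ?_, ?_⟩
          · rw [← hfg t le_rfl]; exact h2
          · rw [← hfg t le_rfl]; exact h3
        · rintro ⟨h1, h2, h3⟩
          refine ⟨fun l hl1 hl2 => by rw [hfg l hl2]; exact h1 l hl1 hl2, ?_, ?_⟩
          · rw [hfg t le_rfl]; exact h2
          · rw [hfg t le_rfl]; exact h3
      have hcnt : cnt j t f = cnt j t g := by
        unfold cnt
        congr 1
        refine Finset.filter_congr fun k hk => ?_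
        have hk' : k ≤ t := by have := Finset.mem_range.mp hk; omega
        unfold goodP
        constructor
        · rintro ⟨h1, h2, h3⟩
          refine ⟨fun l hl1 hl2 => by rw [← hfg l (hl2.trans hk')]; exact h1 l hl1 hl2, ?_, ?_⟩
          · rw [← hfg k hk']; exact h2
          · rw [← hfg k hk']; exact h3
        · rintro ⟨h1, h2, h3⟩
          refine ⟨fun l hl1 hl2 => by rw [hfg l (hl2.trans hk')]; exact h1 l hl1 hl2, ?_, ?_⟩
          · rw [hfg k hk']; exact h2
          · rw [hfg k hk']; exact h3
      simp only [hH]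
      by_cases hf : f ∈ DsetP j m t
      · have hg2 : g ∈ DsetP j m t := ⟨hgood.mp hf.1, hcnt ▸ hf.2⟩
        rw [if_pos hf, if_pos hg2]
      · have hg2 : g ∉ DsetP j m t := fun hc => hf ⟨hgood.mpr hc.1, hcnt.symm ▸ hc.2⟩
        rw [if_neg hf, if_neg hg2]
    have hsupp : ∀ f, H f ≠ 0 → (j:ℝ) ≤ f t := by
      intro f hf
      simp only [hH] at hf
      by_cases hmem : f ∈ DsetP j m t
      · exact hmem.1.2.1
      · rw [if_neg hmem] at hf; exact absurd rfl hf
    have hit := iterate_up cw y hy0 δ hδ q hq t (j:ℝ) (Nat.cast_nonneg j)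
      H hHm hHc hsupp N
    have hlhs : ∫⁻ ω, H (path ω) ∂cw.Pf y = cw.Pf y (Dt t) := by
      have heq : ∀ ω, H (path ω) = (Dt t).indicator (fun _ => (1:ℝ≥0∞)) ω := by
        intro ω
        simp only [hH, Set.indicator_apply]
        rfl
      rw [lintegral_congr heq, lintegral_indicator_const (hDtm t), one_mul]
    have hrhs : ∫⁻ ω, H (path ω) * prodUp (j:ℝ) δ t N (path ω) ∂cw.Pf y
        = cw.Pf y (Dt t ∩ Et t) := by
      have heq : ∀ ω, H (path ω) * prodUp (j:ℝ) δ t N (path ω)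
          = (Dt t ∩ Et t).indicator (fun _ => (1:ℝ≥0∞)) ω := by
        intro ω
        simp only [hH, prodUp_eq_indicator, Set.indicator_apply]
        by_cases h1 : path ω ∈ DsetP j m t
        · by_cases h2 : path ω ∈ EsetP j δ N t
          · have h2' : ∀ i, i < N → (j:ℝ) + ((i:ℝ)+1)*δ ≤ path ω (t+i+1) := h2
            have hmem : ω ∈ Dt t ∩ Et t := ⟨h1, h2⟩
            rw [if_pos h1, if_pos h2', if_pos hmem, one_mul]
          · have h2' : ¬ ∀ i, i < N → (j:ℝ) + ((i:ℝ)+1)*δ ≤ path ω (t+i+1) := h2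
            have hmem : ω ∉ Dt t ∩ Et t := fun hc => h2 hc.2
            rw [if_pos h1, if_neg h2', if_neg hmem, one_mul]
        · have hmem : ω ∉ Dt t ∩ Et t := fun hc => h1 hc.1
          rw [if_neg h1, zero_mul, if_neg hmem]
      rw [lintegral_congr heq, lintegral_indicator_const ((hDtm t).inter (hEtm t)), one_mul]
    rw [hlhs, hrhs] at hit
    exact hit
  -- step 3: per-t difference bound
  have hdiff : ∀ t, cw.Pf y (Dt t \ Et t) ≤ (1 - q^N) * cw.Pf y (Dt t) := by
    intro t
    have hadd : cw.Pf y (Dt t ∩ Et t) + cw.Pf y (Dt t \ Et t) = cw.Pf y (Dt t) :=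
      measure_inter_add_diff (Dt t) (hEtm t)
    have h1 : cw.Pf y (Dt t \ Et t) + q^N * cw.Pf y (Dt t) ≤ cw.Pf y (Dt t) := by
      calc cw.Pf y (Dt t \ Et t) + q^N * cw.Pf y (Dt t)
          ≤ cw.Pf y (Dt t \ Et t) + cw.Pf y (Dt t ∩ Et t) := add_le_add le_rfl (hper t)
      _ = cw.Pf y (Dt t) := by rw [add_comm]; exact hadd
    have h2 : cw.Pf y (Dt t \ Et t) ≤ cw.Pf y (Dt t) - q^N * cw.Pf y (Dt t) := by
      refine ENNReal.le_sub_of_add_le_right ?_ h1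
      exact ENNReal.mul_ne_top (ENNReal.pow_ne_top (fun htop => by
        have := hq.trans_lt (measure_lt_top cw.μ _)
        rw [htop] at this
        exact lt_irrefl _ this)) (measure_ne_top _ _)
    refine h2.trans (le_of_eq ?_)
    rw [ENNReal.sub_mul (fun _ _ => measure_ne_top _ _), one_mul]
  -- step 4: union identity for {L ≥ m}
  have hunion : (⋃ t, Dt t) = {ω | (m : ℝ≥0∞) ≤ localTimeL cw j ω} := by
    ext ω
    simp only [Set.mem_iUnion, Set.mem_setOf_eq, localTime_eq]
    constructor
    · rintro ⟨t, hD⟩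
      exact visit_le_tsum j m t (path ω) hD.2
    · intro hL
      obtain ⟨t, h1, h2⟩ := exists_visit j m hm (path ω) hL
      exact ⟨t, h1, h2⟩
  have hdisj : Pairwise (Function.onFun Disjoint Dt) := by
    intro t t' hne
    refine Set.disjoint_left.mpr fun ω h1 h2 => hne ?_
    exact visit_unique j m (path ω) h1 h2
  calc cw.Pf y {ω | ((m+N:ℕ) : ℝ≥0∞) ≤ localTimeL cw j ω}
      ≤ cw.Pf y (⋃ t, (Dt t \ Et t)) := measure_mono hsub
  _ ≤ ∑' t, cw.Pf y (Dt t \ Et t) := measure_iUnion_le _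
  _ ≤ ∑' t, (1 - q^N) * cw.Pf y (Dt t) := ENNReal.tsum_le_tsum hdiff
  _ = (1 - q^N) * ∑' t, cw.Pf y (Dt t) := ENNReal.tsum_mul_left
  _ = (1 - q^N) * cw.Pf y (⋃ t, Dt t) := by rw [measure_iUnion hdisj hDtm]
  _ = (1 - q^N) * cw.Pf y {ω | (m : ℝ≥0∞) ≤ localTimeL cw j ω} := by rw [hunion]

end CondWalkProof
/-- For `j ≥ 0`, let `L(j)` denote the number of visits of the conditioned walk `(S⁺_n)` to
the interval `[j, j+1)` before its first entry into `[j+2, ∞)`, when started from a point of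
`[j, j+1)`. Then `L(j)` is stochastically dominated by a geometric random variable whose
success probability is bounded below uniformly in `j`: there exist constants `C₃, c₃ > 0`
independent of `j` such that `sup_{y ∈ [j, j+1)} 𝐏_y(L(j) ≥ m) ≤ C₃ e^{-c₃ m}` for all
`m ≥ 1`. -/
theorem conditioned_walk_local_time_geometric
    {Ω Ω₀ : Type*} [MeasurableSpace Ω] [MeasurableSpace Ω₀] (cw : CondWalk Ω Ω₀) :
    ∃ C₃ > (0 : ℝ), ∃ c₃ > (0 : ℝ), ∀ j : ℕ, ∀ m : ℕ, 1 ≤ m →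
      ∀ y ∈ Set.Ico (j : ℝ) ((j : ℝ) + 1),
        cw.Pf y {ω | (m : ℝ≥0∞) ≤ localTimeL cw j ω}
          ≤ ENNReal.ofReal (C₃ * exp (-c₃ * (m : ℝ))) := by
  classical
  haveI := cw.prob_μ
  obtain ⟨δ, hδ, hμδ⟩ := CondWalkProof.exists_delta cw
  set qR : ℝ := min ((cw.μ {z : ℝ | δ ≤ z}).toReal) (1/2) with hqRdef
  have hqR0 : 0 < qR := by
    refine lt_min ?_ (by norm_num)
    exact ENNReal.toReal_pos hμδ (measure_ne_top _ _)
  have hqR1 : qR < 1 := lt_of_le_of_lt (min_le_right _ _) (by norm_num)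
  set q : ℝ≥0∞ := ENNReal.ofReal qR with hqdef
  have hq : q ≤ cw.μ {z : ℝ | δ ≤ z} := by
    rw [hqdef]
    calc ENNReal.ofReal qR ≤ ENNReal.ofReal ((cw.μ {z : ℝ | δ ≤ z}).toReal) :=
          ENNReal.ofReal_le_ofReal (min_le_left _ _)
    _ = cw.μ {z : ℝ | δ ≤ z} := ENNReal.ofReal_toReal (measure_ne_top _ _)
  set N : ℕ := Nat.ceil ((2:ℝ)/δ) with hNdef
  have hN0 : 0 < N := by
    rw [hNdef]
    exact Nat.ceil_pos.mpr (by positivity)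
  have hNδ : 2 ≤ (N:ℝ)*δ := by
    have h1 : (2:ℝ)/δ ≤ (N:ℝ) := Nat.le_ceil _
    rw [div_le_iff₀ hδ] at h1
    linarith
  set rR : ℝ := 1 - qR^N with hrRdef
  have hrR0 : 0 < rR := by
    rw [hrRdef]
    have : qR^N < 1 := pow_lt_one₀ hqR0.le hqR1 (by omega)
    linarith
  have hrR1 : rR < 1 := by
    rw [hrRdef]
    have : 0 < qR^N := pow_pos hqR0 N
    linarith
  have hqpow : (1:ℝ≥0∞) - q^N = ENNReal.ofReal rR := by
    rw [hqdef, ← ENNReal.ofReal_pow hqR0.le, hrRdef, ENNReal.ofReal_sub _ (by positivity),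
      ENNReal.ofReal_one]
  set L : ℝ := Real.log rR with hLdef
  have hL : L < 0 := Real.log_neg hrR0 hrR1
  have hnegL : 0 < -L := neg_pos.mpr hL
  have hNR0 : (0:ℝ) < (N:ℝ) := by exact_mod_cast hN0
  refine ⟨rR⁻¹, by positivity, -L/(N:ℝ), by positivity, ?_⟩
  intro j m hm y hy
  have hy0 : 0 ≤ y := le_trans (Nat.cast_nonneg j) hy.1
  haveI := cw.prob_Pf y hy0
  -- geometric iteration
  have hiter : ∀ k : ℕ,
      cw.Pf y {ω | ((1 + k*N : ℕ) : ℝ≥0∞) ≤ localTimeL cw j ω} ≤ (ENNReal.ofReal rR)^k := by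
    intro k
    induction k with
    | zero => simpa using prob_le_one
    | succ k ih =>
      have hidx : 1 + (k+1)*N = (1+k*N) + N := by ring
      rw [hidx]
      calc cw.Pf y {ω | (((1+k*N) + N : ℕ) : ℝ≥0∞) ≤ localTimeL cw j ω}
          ≤ (1 - q^N) * cw.Pf y {ω | ((1+k*N : ℕ) : ℝ≥0∞) ≤ localTimeL cw j ω} :=
            CondWalkProof.recursion cw j y hy0 (1+k*N) N (by omega) δ hδ hNδ q hq
      _ ≤ (ENNReal.ofReal rR) * (ENNReal.ofReal rR)^k := by
            rw [hqpow]
            exact mul_le_mul_right ih _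
      _ = (ENNReal.ofReal rR)^(k+1) := (pow_succ' _ _).symm
  set k : ℕ := (m-1)/N with hkdef
  have hk1 : 1 + k*N ≤ m := by
    have h1 : (m-1)/N * N ≤ m - 1 := Nat.div_mul_le_self _ _
    rw [hkdef]
    omega
  have hk2 : m ≤ k*N + N := by
    have h1 : (m-1)/N * N + (m-1) % N = m - 1 := Nat.div_add_mod' _ _
    have h2 : (m-1) % N < N := Nat.mod_lt _ hN0
    rw [hkdef]
    omega
  have hsub : {ω | (m : ℝ≥0∞) ≤ localTimeL cw j ω}
      ⊆ {ω | ((1 + k*N : ℕ) : ℝ≥0∞) ≤ localTimeL cw j ω} := by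
    intro ω hω
    simp only [Set.mem_setOf_eq] at hω ⊢
    refine le_trans ?_ hω
    exact_mod_cast Nat.cast_le.mpr hk1
  calc cw.Pf y {ω | (m : ℝ≥0∞) ≤ localTimeL cw j ω}
      ≤ cw.Pf y {ω | ((1 + k*N : ℕ) : ℝ≥0∞) ≤ localTimeL cw j ω} := measure_mono hsub
  _ ≤ (ENNReal.ofReal rR)^k := hiter k
  _ = ENNReal.ofReal (rR^k) := (ENNReal.ofReal_pow hrR0.le k).symm
  _ ≤ ENNReal.ofReal (rR⁻¹ * exp (-(-L/(N:ℝ)) * (m:ℝ))) := by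
      refine ENNReal.ofReal_le_ofReal ?_
      have hNR : (0:ℝ) < (N:ℝ) := by exact_mod_cast hN0
      have hmle : (m:ℝ) ≤ ((k:ℝ)+1)*(N:ℝ) := by
        have : (m:ℝ) ≤ (k:ℝ)*(N:ℝ) + (N:ℝ) := by exact_mod_cast hk2
        linarith
      have h1 : rR^k = exp ((k:ℝ) * L) := by
        rw [hLdef, Real.exp_nat_mul, Real.exp_log hrR0]
      have h2 : rR⁻¹ * exp (-(-L/(N:ℝ)) * (m:ℝ)) = exp (-L + L/(N:ℝ) * (m:ℝ)) := by
        rw [Real.exp_add, ← Real.exp_log hrR0, ← Real.exp_neg]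
        ring_nf
        rw [hLdef]; ring
      rw [h1, h2]
      refine Real.exp_le_exp.mpr ?_
      -- (k:ℝ) * L ≤ -L + L/N * m
      have h3 : L * (((k:ℝ)+1)*(N:ℝ)) ≤ L * (m:ℝ) :=
        mul_le_mul_of_nonpos_left hmle hL.le
      have h4 : L * (((k:ℝ)+1)*(N:ℝ)) / (N:ℝ) ≤ L * (m:ℝ) / (N:ℝ) :=
        (div_le_div_iff_of_pos_right hNR).mpr h3
      have h5 : L * (((k:ℝ)+1)*(N:ℝ)) / (N:ℝ) = L * ((k:ℝ)+1) := by
        field_simp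
      rw [h5] at h4
      have h6 : L/(N:ℝ) * (m:ℝ) = L * (m:ℝ) / (N:ℝ) := by ring
      rw [h6]
      linarith
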